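/- arXiv:1207.3721 — 2 statements merged into one kernel-verified Lean document; each statement's English description precedes it below -/
import Mathlib

section
/- Fix a>1/4 and p∈ℝ, and let H(r,θ) = ((1-r²)/(1+r²-2r cos θ))^p, F(r,θ) = 2r sin θ/(1+r²-2r cos θ), J(r,θ) = r(1-r²)/(1+r²-2r cos θ). Then for all 0<r<1 and θ with 1+r²-2r cos θ ≠ 0, H_{θθ} + aF H_θ + aJ H_r + (a-1/4) F_θ H = (a-p) F H_θ + (ap - p + a - 1/4) F_θ H. -/
open Real

noncomputable def H1 (p r θ : ℝ) : ℝ := ((1 - r^2) / (1 + r^2 - 2*r*Real.cos θ)) ^ p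

noncomputable def F1 (r θ : ℝ) : ℝ := 2*r*Real.sin θ / (1 + r^2 - 2*r*Real.cos θ)

noncomputable def J1 (r θ : ℝ) : ℝ := r*(1 - r^2) / (1 + r^2 - 2*r*Real.cos θ)

lemma Dpos {r : ℝ} (hr0 : 0 < r) (hr1 : r < 1) (θ : ℝ) :
    0 < 1 + r^2 - 2*r*Real.cos θ := by
  nlinarith [Real.cos_le_one θ, sq_nonneg (1 - r)]

lemma rpow_split {x : ℝ} (hx : x ≠ 0) (p : ℝ) : x ^ (p-1) * x = x ^ p := by
  rw [← Real.rpow_add_one hx, sub_add_cancel]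

lemma hasDerivAt_D (r θ : ℝ) :
    HasDerivAt (fun θ' => 1 + r^2 - 2*r*Real.cos θ') (2*r*Real.sin θ) θ := by
  have h := ((Real.hasDerivAt_cos θ).const_mul (2*r)).const_sub (1 + r^2)
  refine h.congr_deriv ?_
  ring

lemma hasDerivAt_F {r : ℝ} (hr0 : 0 < r) (hr1 : r < 1) (θ : ℝ) :
    HasDerivAt (fun θ' => F1 r θ')
      ((2*r*Real.cos θ * (1 + r^2 - 2*r*Real.cos θ) - (2*r*Real.sin θ)^2)
        / (1 + r^2 - 2*r*Real.cos θ)^2) θ := by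
  have hnum : HasDerivAt (fun θ' => 2*r*Real.sin θ') (2*r*Real.cos θ) θ := by
    have := (Real.hasDerivAt_sin θ).const_mul (2*r)
    convert this using 1
  have h := hnum.div (hasDerivAt_D r θ) (Dpos hr0 hr1 θ).ne'
  unfold F1
  refine h.congr_deriv ?_
  ring

lemma hasDerivAt_H (p : ℝ) {r : ℝ} (hr0 : 0 < r) (hr1 : r < 1) (θ : ℝ) :
    HasDerivAt (fun θ' => H1 p r θ') (-p * F1 r θ * H1 p r θ) θ := by
  have hD := Dpos hr0 hr1 θ
  have hb : 0 < (1 - r^2) / (1 + r^2 - 2*r*Real.cos θ) :=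
    div_pos (by nlinarith) hD
  have hu : HasDerivAt (fun θ' => (1 - r^2) / (1 + r^2 - 2*r*Real.cos θ'))
      ((0 * (1 + r^2 - 2*r*Real.cos θ) - (1 - r^2) * (2*r*Real.sin θ))
        / (1 + r^2 - 2*r*Real.cos θ)^2) θ :=
    (hasDerivAt_const θ (1 - r^2)).div (hasDerivAt_D r θ) hD.ne'
  have h := hu.rpow_const (p := p) (Or.inl hb.ne')
  refine h.congr_deriv ?_
  unfold H1 F1
  rw [← rpow_split hb.ne' p]
  field_simp
  ring

/-- identity (3.9) for H = u_𝔻^p. -/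
theorem stmt_1 (a p : ℝ) (ha : 1/4 < a) (r θ : ℝ) (hr0 : 0 < r) (hr1 : r < 1)
    (hden : 1 + r^2 - 2*r*Real.cos θ ≠ 0) :
    deriv (fun θ' => deriv (fun θ'' => H1 p r θ'') θ') θ
      + a * F1 r θ * deriv (fun θ' => H1 p r θ') θ
      + a * J1 r θ * deriv (fun r' => H1 p r' θ) r
      + (a - 1/4) * deriv (fun θ' => F1 r θ') θ * H1 p r θ
    = (a - p) * F1 r θ * deriv (fun θ' => H1 p r θ') θ
      + (a*p - p + a - 1/4) * deriv (fun θ' => F1 r θ') θ * H1 p r θ := by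
  have hD := Dpos hr0 hr1 θ
  have h1r : 0 < 1 - r^2 := by nlinarith
  have hb : 0 < (1 - r^2) / (1 + r^2 - 2*r*Real.cos θ) := div_pos h1r hD
  -- first θ-derivative
  have hHθ : deriv (fun θ' => H1 p r θ') θ = -p * F1 r θ * H1 p r θ :=
    (hasDerivAt_H p hr0 hr1 θ).deriv
  -- F derivative
  have hFθ : deriv (fun θ' => F1 r θ') θ
      = (2*r*Real.cos θ * (1 + r^2 - 2*r*Real.cos θ) - (2*r*Real.sin θ)^2)
        / (1 + r^2 - 2*r*Real.cos θ)^2 :=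
    (hasDerivAt_F hr0 hr1 θ).deriv
  -- second θ-derivative
  have hfun : (fun θ' => deriv (fun θ'' => H1 p r θ'') θ')
      = fun θ' => -p * F1 r θ' * H1 p r θ' :=
    funext fun θ' => (hasDerivAt_H p hr0 hr1 θ').deriv
  have hH2 : HasDerivAt (fun θ' => -p * F1 r θ' * H1 p r θ')
      ((-p * ((2*r*Real.cos θ * (1 + r^2 - 2*r*Real.cos θ) - (2*r*Real.sin θ)^2)
        / (1 + r^2 - 2*r*Real.cos θ)^2)) * H1 p r θ
        + (-p * F1 r θ) * (-p * F1 r θ * H1 p r θ)) θ :=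
    ((hasDerivAt_F hr0 hr1 θ).const_mul (-p)).mul (hasDerivAt_H p hr0 hr1 θ)
  have hHθθ : deriv (fun θ' => deriv (fun θ'' => H1 p r θ'') θ') θ
      = (-p * ((2*r*Real.cos θ * (1 + r^2 - 2*r*Real.cos θ) - (2*r*Real.sin θ)^2)
        / (1 + r^2 - 2*r*Real.cos θ)^2)) * H1 p r θ
        + (-p * F1 r θ) * (-p * F1 r θ * H1 p r θ) := by
    rw [hfun]; exact hH2.deriv
  -- r-derivative
  have hnum : HasDerivAt (fun r' : ℝ => 1 - r'^2) (-(2*r)) r := by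
    have h := (hasDerivAt_pow 2 r).const_sub 1
    refine h.congr_deriv ?_
    push_cast
    ring
  have h2c : HasDerivAt (fun r' : ℝ => 2*r'*Real.cos θ) (2*Real.cos θ) r := by
    have h := ((hasDerivAt_id r).const_mul 2).mul_const (Real.cos θ)
    refine h.congr_deriv ?_
    ring
  have hDr : HasDerivAt (fun r' : ℝ => 1 + r'^2 - 2*r'*Real.cos θ) (2*r - 2*Real.cos θ) r := by
    have h := ((hasDerivAt_pow 2 r).const_add 1).sub h2c
    refine h.congr_deriv ?_
    push_cast
    ring
  have hbr : HasDerivAt (fun r' => (1 - r'^2) / (1 + r'^2 - 2*r'*Real.cos θ))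
      ((-(2*r) * (1 + r^2 - 2*r*Real.cos θ) - (1 - r^2) * (2*r - 2*Real.cos θ))
        / (1 + r^2 - 2*r*Real.cos θ)^2) r :=
    hnum.div hDr hD.ne'
  have hHr : deriv (fun r' => H1 p r' θ) r
      = ((-(2*r) * (1 + r^2 - 2*r*Real.cos θ) - (1 - r^2) * (2*r - 2*Real.cos θ))
        / (1 + r^2 - 2*r*Real.cos θ)^2) * p
        * ((1 - r^2) / (1 + r^2 - 2*r*Real.cos θ)) ^ (p-1) := by
    have h := hbr.rpow_const (p := p) (Or.inl hb.ne')
    exact h.deriv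
  rw [hHθθ, hHθ, hFθ, hHr]
  unfold H1 F1 J1
  rw [← rpow_split hb.ne' p]
  have hs : (2*r*Real.sin θ)^2 = 4*r^2 - 4*r^2*Real.cos θ^2 := by
    nlinarith [Real.sin_sq_add_cos_sq θ]
  have key : r*(1 - r^2) / (1 + r^2 - 2*r*Real.cos θ)
        * (((-(2*r) * (1 + r^2 - 2*r*Real.cos θ) - (1 - r^2) * (2*r - 2*Real.cos θ))
          / (1 + r^2 - 2*r*Real.cos θ)^2) * p
          * ((1 - r^2) / (1 + r^2 - 2*r*Real.cos θ)) ^ (p-1))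
      = p * ((2*r*Real.cos θ * (1 + r^2 - 2*r*Real.cos θ) - (2*r*Real.sin θ)^2)
          / (1 + r^2 - 2*r*Real.cos θ)^2)
        * (((1 - r^2) / (1 + r^2 - 2*r*Real.cos θ)) ^ (p-1)
          * ((1 - r^2) / (1 + r^2 - 2*r*Real.cos θ))) := by
    rw [hs]
    field_simp
    ring
  linear_combination a * key
end

section
/- Suppose Y: [0,∞) → (0,∞) is differentiable and satisfies −a coth(Y_t) ≤ Y_t' ≤ −a tanh(Y_t) for all t ≥ 0 (for a fixed a>0), with Y_0 = y > 0. Then for all t ≥ 0 with (cosh y)e^{−at} ≥ 1: arccosh((cosh y) e^{−at}) ≤ Y_t ≤ arcsinh((sinh y) e^{−at}). -/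
/-- inverse hyperbolic cosine -/
noncomputable def arcosh (x : ℝ) : ℝ := Real.log (x + Real.sqrt (x^2 - 1))

lemma arcosh_eq_arsinh {x : ℝ} (hx : 1 ≤ x) :
    arcosh x = Real.arsinh (Real.sqrt (x^2 - 1)) := by
  have h0 : (0:ℝ) ≤ x^2 - 1 := by nlinarith
  have hs : Real.sqrt (x^2-1) ^ 2 = x^2 - 1 := Real.sq_sqrt h0
  have hx2 : Real.sqrt (1 + Real.sqrt (x^2-1)^2) = x := by
    rw [hs, show 1 + (x^2-1) = x^2 by ring]
    exact Real.sqrt_sq (by linarith)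
  rw [Real.arsinh, hx2, arcosh, add_comm]

/-- deterministic comparison for the imaginary part of the
radial Loewner flow: if -a coth(Y_t) ≤ Y_t' ≤ -a tanh(Y_t) with Y_0 = y > 0, then
arccosh((cosh y)e^{-at}) ≤ Y_t ≤ arcsinh((sinh y)e^{-at}) as long as (cosh y)e^{-at} ≥ 1. -/
theorem stmt_10 (a : ℝ) (ha : 0 < a) (y : ℝ) (hy : 0 < y) (Y : ℝ → ℝ)
    (hdiff : Differentiable ℝ Y) (hpos : ∀ t, 0 ≤ t → 0 < Y t) (hY0 : Y 0 = y)
    (hlow : ∀ t, 0 ≤ t → -a * (Real.cosh (Y t) / Real.sinh (Y t)) ≤ deriv Y t)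
    (hup : ∀ t, 0 ≤ t → deriv Y t ≤ -a * Real.tanh (Y t)) :
    ∀ t, 0 ≤ t → 1 ≤ Real.cosh y * Real.exp (-a*t) →
      arcosh (Real.cosh y * Real.exp (-a*t)) ≤ Y t ∧
      Y t ≤ Real.arsinh (Real.sinh y * Real.exp (-a*t)) := by
  have hsinhpos : ∀ t, 0 ≤ t → 0 < Real.sinh (Y t) := fun t ht => Real.sinh_pos_iff.mpr (hpos t ht)
  have hexp : ∀ t : ℝ, HasDerivAt (fun t => Real.exp (a*t)) (Real.exp (a*t) * a) t := by
    intro t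
    simpa [mul_comm] using (((hasDerivAt_id t).const_mul a).exp)
  have hgd : ∀ t, HasDerivAt (fun t => Real.cosh (Y t) * Real.exp (a*t))
      (Real.sinh (Y t) * deriv Y t * Real.exp (a*t) + Real.cosh (Y t) * (Real.exp (a*t) * a)) t :=
    fun t => ((hdiff t).hasDerivAt.cosh).mul (hexp t)
  have hhd : ∀ t, HasDerivAt (fun t => Real.sinh (Y t) * Real.exp (a*t))
      (Real.cosh (Y t) * deriv Y t * Real.exp (a*t) + Real.sinh (Y t) * (Real.exp (a*t) * a)) t :=
    fun t => ((hdiff t).hasDerivAt.sinh).mul (hexp t)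
  have hgmono : MonotoneOn (fun t => Real.cosh (Y t) * Real.exp (a*t)) (Set.Ici 0) := by
    apply monotoneOn_of_deriv_nonneg (convex_Ici 0)
    · exact ((Real.continuous_cosh.comp hdiff.continuous).mul
        (Real.continuous_exp.comp (continuous_const.mul continuous_id))).continuousOn
    · intro x hx; exact (hgd x).differentiableAt.differentiableWithinAt
    · intro x hx
      rw [interior_Ici] at hx
      rw [(hgd x).deriv]
      have hx0 : (0:ℝ) ≤ x := le_of_lt hx
      have hs := hsinhpos x hx0
      have he : (0:ℝ) < Real.exp (a*x) := Real.exp_pos _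
      have h1' : (-a * Real.cosh (Y x)) / Real.sinh (Y x) ≤ deriv Y x := by
        rw [mul_div_assoc]; exact hlow x hx0
      have h2 := (div_le_iff₀ hs).mp h1'
      nlinarith [mul_le_mul_of_nonneg_right h2 he.le]
  have hhanti : AntitoneOn (fun t => Real.sinh (Y t) * Real.exp (a*t)) (Set.Ici 0) := by
    apply antitoneOn_of_deriv_nonpos (convex_Ici 0)
    · exact ((Real.continuous_sinh.comp hdiff.continuous).mul
        (Real.continuous_exp.comp (continuous_const.mul continuous_id))).continuousOn
    · intro x hx; exact (hhd x).differentiableAt.differentiableWithinAt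
    · intro x hx
      rw [interior_Ici] at hx
      rw [(hhd x).deriv]
      have hx0 : (0:ℝ) ≤ x := le_of_lt hx
      have hs := hsinhpos x hx0
      have hc : (0:ℝ) < Real.cosh (Y x) := Real.cosh_pos (Y x)
      have he : (0:ℝ) < Real.exp (a*x) := Real.exp_pos _
      have h1 := hup x hx0
      rw [Real.tanh_eq_sinh_div_cosh] at h1
      have h2 : Real.cosh (Y x) * deriv Y x ≤ -a * Real.sinh (Y x) := by
        have h1' : deriv Y x ≤ (-a * Real.sinh (Y x)) / Real.cosh (Y x) := by
          rw [mul_div_assoc]; exact h1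
        calc Real.cosh (Y x) * deriv Y x
            ≤ Real.cosh (Y x) * ((-a * Real.sinh (Y x)) / Real.cosh (Y x)) :=
              mul_le_mul_of_nonneg_left h1' hc.le
          _ = -a * Real.sinh (Y x) := by field_simp
      nlinarith [mul_le_mul_of_nonneg_right h2 he.le]
  intro t ht hct
  have het : (0:ℝ) < Real.exp (a*t) := Real.exp_pos _
  have hinv : Real.exp (-a*t) = (Real.exp (a*t))⁻¹ := by
    rw [← Real.exp_neg]; ring_nf
  have hg0 : Real.cosh y * Real.exp (a*0) ≤ Real.cosh (Y t) * Real.exp (a*t) := by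
    have := hgmono (Set.self_mem_Ici) (Set.mem_Ici.mpr ht) ht
    simpa [hY0] using this
  have hcosh : Real.cosh y * Real.exp (-a*t) ≤ Real.cosh (Y t) := by
    rw [hinv, ← div_eq_mul_inv, div_le_iff₀ het]
    simpa using hg0
  have hh0 : Real.sinh (Y t) * Real.exp (a*t) ≤ Real.sinh y * Real.exp (a*0) := by
    have := hhanti (Set.self_mem_Ici) (Set.mem_Ici.mpr ht) ht
    simpa [hY0] using this
  have hsinh : Real.sinh (Y t) ≤ Real.sinh y * Real.exp (-a*t) := by
    rw [hinv, ← div_eq_mul_inv, le_div_iff₀ het]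
    simpa using hh0
  constructor
  · set c := Real.cosh y * Real.exp (-a*t) with hc
    rw [arcosh_eq_arsinh hct]
    have hsY : 0 < Real.sinh (Y t) := hsinhpos t ht
    have hsq : Real.sqrt (c^2 - 1) ≤ Real.sinh (Y t) := by
      have h1 : c^2 - 1 ≤ Real.sinh (Y t)^2 := by
        have := Real.sinh_sq (Y t)
        nlinarith [Real.cosh_pos (x := Y t)]
      calc Real.sqrt (c^2-1) ≤ Real.sqrt (Real.sinh (Y t)^2) := Real.sqrt_le_sqrt h1
        _ = Real.sinh (Y t) := Real.sqrt_sq hsY.le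
    calc Real.arsinh (Real.sqrt (c^2-1)) ≤ Real.arsinh (Real.sinh (Y t)) :=
          Real.arsinh_le_arsinh.mpr hsq
      _ = Y t := Real.arsinh_sinh _
  · calc Y t = Real.arsinh (Real.sinh (Y t)) := (Real.arsinh_sinh _).symm
      _ ≤ _ := Real.arsinh_le_arsinh.mpr hsinh
end
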